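/- Let A be an abelian group and φ : ℤ → ℂ a phase polynomial of degree k with φ^p = 1 for a prime p with k ≤ p−1. Then φ is periodic with period p: φ(m+p) = φ(m) for all m. -/

import Mathlib

/-- Multiplicative derivative: `Δ_t φ (x) = φ x * conj (φ (x+t))`. -/
noncomputable def phaseDeriv {A : Type*} [AddCommGroup A] (φ : A → ℂ) (t : A) : A → ℂ :=
  fun x => φ x * (starRingEnd ℂ) (φ (x + t))

/-- `φ` is a phase polynomial of degree `k`: it has modulus `1` and any `k+1`
consecutive multiplicative derivatives yield the constant `1`. -/
noncomputable def IsPhasePoly {A : Type*} [AddCommGroup A] (k : ℕ) (φ : A → ℂ) : Prop :=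
  (∀ x, ‖φ x‖ = 1) ∧
    ∀ t : Fin (k + 1) → A, ∀ x, ((List.ofFn t).foldl phaseDeriv φ) x = 1

/-- Multiplicative forward difference. -/
noncomputable def mdiff (f : ℤ → ℂ) : ℤ → ℂ := fun x => f (x + 1) * (f x)⁻¹

lemma mdiff_iter_norm (f : ℤ → ℂ) (hf : ∀ x, ‖f x‖ = 1) (j : ℕ) :
    ∀ x, ‖(mdiff^[j] f) x‖ = 1 := by
  induction j with
  | zero => simpa using hf
  | succ n ih =>
    intro x
    rw [Function.iterate_succ_apply']
    simp [mdiff, norm_mul, norm_inv, ih]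

lemma mdiff_iter_ne (f : ℤ → ℂ) (hf : ∀ x, ‖f x‖ = 1) (j : ℕ) (x : ℤ) :
    (mdiff^[j] f) x ≠ 0 := by
  intro h
  have := mdiff_iter_norm f hf j x
  rw [h] at this
  simp at this

lemma mdiff_iter_shift (f : ℤ → ℂ) (hf : ∀ x, ‖f x‖ = 1) (j : ℕ) (x : ℤ) :
    (mdiff^[j] f) (x + 1) = (mdiff^[j + 1] f) x * (mdiff^[j] f) x := by
  have h0 : (mdiff^[j] f) x ≠ 0 := mdiff_iter_ne f hf j x
  rw [Function.iterate_succ_apply']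
  simp only [mdiff]
  field_simp

lemma newton (f : ℤ → ℂ) (hf : ∀ x, ‖f x‖ = 1) :
    ∀ (n : ℕ) (x : ℤ), f (x + (n : ℤ)) =
      ∏ j ∈ Finset.range (n + 1), (mdiff^[j] f) x ^ n.choose j := by
  intro n
  induction n with
  | zero => intro x; simp
  | succ n ih =>
    intro x
    have harg : x + ((n + 1 : ℕ) : ℤ) = (x + 1) + (n : ℤ) := by push_cast; ring
    rw [harg, ih]
    have hterm : ∀ j ∈ Finset.range (n + 1),
        (mdiff^[j] f) (x + 1) ^ n.choose j
          = ((mdiff^[j + 1] f) x * (mdiff^[j] f) x) ^ n.choose j := by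
      intro j _; rw [mdiff_iter_shift f hf]
    rw [Finset.prod_congr rfl hterm]
    set g : ℕ → ℂ := fun j => (mdiff^[j] f) x with hg
    have e1 : ∏ j ∈ Finset.range (n + 1 + 1), g j ^ (n + 1).choose j
        = (∏ j ∈ Finset.range (n + 1), g (j + 1) ^ (n.choose j + n.choose (j + 1))) * g 0 := by
      rw [Finset.prod_range_succ']
      simp [Nat.choose_succ_succ]
    have e2 : ∏ j ∈ Finset.range (n + 1), g (j + 1) ^ (n.choose j + n.choose (j + 1))
        = (∏ j ∈ Finset.range (n + 1), g (j + 1) ^ n.choose j)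
          * (∏ j ∈ Finset.range (n + 1), g (j + 1) ^ n.choose (j + 1)) := by
      simp [pow_add, Finset.prod_mul_distrib]
    have e3 : ∏ j ∈ Finset.range (n + 1), g (j + 1) ^ n.choose (j + 1)
        = ∏ j ∈ Finset.range n, g (j + 1) ^ n.choose (j + 1) := by
      rw [Finset.prod_range_succ]
      simp [Nat.choose_succ_self]
    have e4 : ∏ j ∈ Finset.range (n + 1), g j ^ n.choose j
        = (∏ j ∈ Finset.range n, g (j + 1) ^ n.choose (j + 1)) * g 0 := by
      rw [Finset.prod_range_succ']
      simp
    rw [e1, e2, e3]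
    simp only [mul_pow, Finset.prod_mul_distrib]
    rw [e4]
    ring

lemma mdiff_iter_pow (φ : ℤ → ℂ) (p : ℕ) (hroot : ∀ m : ℤ, φ m ^ p = 1) (j : ℕ) :
    ∀ x, (mdiff^[j] φ) x ^ p = 1 := by
  induction j with
  | zero => simpa using hroot
  | succ n ih =>
    intro x
    rw [Function.iterate_succ_apply']
    simp only [mdiff]
    rw [mul_pow, inv_pow, ih, ih]
    simp

lemma mdiff_iter_one (d : ℕ) : mdiff^[d] (fun _ => (1 : ℂ)) = fun _ => 1 := by
  induction d with
  | zero => rfl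
  | succ n ih =>
    rw [Function.iterate_succ_apply, show mdiff (fun _ => (1 : ℂ)) = fun _ => 1 by
      funext x; simp [mdiff], ih]

lemma foldl_replicate (n : ℕ) (g : ℤ → ℂ) :
    (List.replicate n (1 : ℤ)).foldl phaseDeriv g = (fun h => phaseDeriv h 1)^[n] g := by
  induction n generalizing g with
  | zero => rfl
  | succ m ih =>
    rw [List.replicate_succ, List.foldl_cons, ih, ← Function.iterate_succ_apply]

lemma conj_eq_inv_of_norm_one (z : ℂ) (hz : ‖z‖ = 1) : (starRingEnd ℂ) z = z⁻¹ := by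
  have h : z * (starRingEnd ℂ) z = 1 := by
    rw [Complex.mul_conj, Complex.normSq_eq_norm_sq, hz]
    norm_num
  exact eq_inv_of_mul_eq_one_right h

lemma iter_deriv_eq (φ : ℤ → ℂ) (hnorm : ∀ x, ‖φ x‖ = 1) (n : ℕ) :
    ∀ x, (fun h => phaseDeriv h 1)^[n] φ x = (mdiff^[n] φ) x ^ ((-1 : ℤ) ^ n) := by
  induction n with
  | zero => intro x; simp
  | succ m ih =>
    intro x
    rw [Function.iterate_succ_apply']
    show (fun h => phaseDeriv h 1)^[m] φ x
        * (starRingEnd ℂ) ((fun h => phaseDeriv h 1)^[m] φ (x + 1)) = _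
    rw [ih, ih]
    rw [map_zpow₀, conj_eq_inv_of_norm_one _ (mdiff_iter_norm φ hnorm m (x + 1))]
    rw [← mul_zpow]
    rw [mdiff_iter_shift φ hnorm m x]
    have hne : (mdiff^[m] φ) x ≠ 0 := mdiff_iter_ne φ hnorm m x
    have : (mdiff^[m] φ) x * ((mdiff^[m + 1] φ) x * (mdiff^[m] φ) x)⁻¹
        = ((mdiff^[m + 1] φ) x)⁻¹ := by
      rw [mul_inv, mul_comm ((mdiff^[m + 1] φ) x)⁻¹, ← mul_assoc, mul_inv_cancel₀ hne, one_mul]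
    rw [this, inv_zpow, ← zpow_neg]
    congr 1
    rw [pow_succ]
    ring

/-- A phase polynomial on  of degree  taking values in -th
roots of unity is -periodic. -/
theorem stmt_9 (p : ℕ) (hp : p.Prime) (k : ℕ) (hk : k ≤ p - 1)
    (φ : ℤ → ℂ) (hφ : IsPhasePoly k φ) (hroot : ∀ m : ℤ, φ m ^ p = 1) :
    ∀ m : ℤ, φ (m + (p : ℤ)) = φ m := by
  obtain ⟨hnorm, hderiv⟩ := hφ
  have hkp : k + 1 ≤ p := by have := hp.two_le; omega
  have hm1 : ∀ x, (mdiff^[k + 1] φ) x = 1 := by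
    intro x
    have h := hderiv (fun _ => (1 : ℤ)) x
    rw [show List.ofFn (fun _ : Fin (k + 1) => (1 : ℤ)) = List.replicate (k + 1) 1 from
      List.ofFn_const _ _, foldl_replicate, iter_deriv_eq φ hnorm] at h
    rcases Nat.even_or_odd (k + 1) with he | ho
    · rwa [he.neg_one_pow, zpow_one] at h
    · rw [ho.neg_one_pow] at h
      simpa using h
  have htail : ∀ j, k + 1 ≤ j → ∀ x, (mdiff^[j] φ) x = 1 := by
    intro j hj
    obtain ⟨d, rfl⟩ : ∃ d, j = d + (k + 1) := ⟨j - (k + 1), by omega⟩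
    intro x
    rw [Function.iterate_add_apply, funext hm1, mdiff_iter_one]
  intro m
  rw [newton φ hnorm p m, Finset.prod_range_succ, htail p hkp m, one_pow, mul_one]
  obtain ⟨q, rfl⟩ : ∃ q, p = q + 1 := ⟨p - 1, by have := hp.two_le; omega⟩
  rw [Finset.prod_range_succ']
  have hmid : ∀ j ∈ Finset.range q, (mdiff^[j + 1] φ) m ^ (q + 1).choose (j + 1) = 1 := by
    intro j hj
    have hjq : j + 1 < q + 1 := by simpa using Finset.mem_range.mp hj
    have hdvd : (q + 1) ∣ (q + 1).choose (j + 1) :=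
      hp.dvd_choose_self (Nat.succ_ne_zero j) hjq
    obtain ⟨c, hc⟩ := hdvd
    rw [hc, pow_mul, mdiff_iter_pow φ (q + 1) hroot (j + 1) m, one_pow]
  rw [Finset.prod_congr rfl hmid]
  simp
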